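/- For n ≥ 2, the number of permutations σ ∈ S_{n+2} satisfying σ⁻¹(1) > σ⁻¹(n+1), σ⁻¹(2) < σ⁻¹(n+2), and σ(j) - σ(j+1) ≤ n for all j ∈ [n+1], equals (n+1)!·(3n+2)/12. -/

import Mathlib

open Finset Polynomial

/-- A permutation `σ` of `{0, ..., n+k-1}` satisfies the order constraints of the
word `w ∈ {r,c}^k` (where `true` encodes the letter `c` and `false` encodes `r`):
for each `i < k`, the position of value `i` is before the position of value `n+i`
when `w i = c`, and after it when `w i = r`. -/
def StripConstraints (n k : ℕ) (w : Fin k → Bool) (σ : Equiv.Perm (Fin (n + k))) : Prop :=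
  ∀ i : Fin k,
    (w i = true →
      (σ.symm ⟨i.val, by have := i.isLt; omega⟩).val
        < (σ.symm ⟨n + i.val, by have := i.isLt; omega⟩).val) ∧
    (w i = false →
      (σ.symm ⟨n + i.val, by have := i.isLt; omega⟩).val
        < (σ.symm ⟨i.val, by have := i.isLt; omega⟩).val)

instance {n k : ℕ} (w : Fin k → Bool) (σ : Equiv.Perm (Fin (n + k))) :
    Decidable (StripConstraints n k w σ) :=
  inferInstanceAs (Decidable (∀ _ : Fin k, _ ∧ _))

/-- `σ` has no `n`-descent: `σ(j) - σ(j+1) ≤ n` for all consecutive positions. -/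
def NoNDescent (n : ℕ) {m : ℕ} (σ : Equiv.Perm (Fin m)) : Prop :=
  ∀ j j' : Fin m, j'.val = j.val + 1 → (σ j).val ≤ n + (σ j').val

instance {n m : ℕ} (σ : Equiv.Perm (Fin m)) : Decidable (NoNDescent n σ) :=
  inferInstanceAs (Decidable (∀ _ _ : Fin m, _ → _))

section Aux
variable {α ι : Type*} [Fintype α] [DecidableEq α] [Fintype ι] [DecidableEq ι]

noncomputable def prescribedEquiv (v g : ι ↪ α) :
    {τ : Equiv.Perm α // ∀ i, τ (v i) = g i} ≃
      ({x : α // x ∉ Set.range v} ≃ {y : α // y ∉ Set.range g}) where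
  toFun τ := Equiv.subtypeEquiv τ.1 (by
    intro x
    constructor
    · intro hx hgx
      obtain ⟨i, hi⟩ := hgx
      exact hx ⟨i, τ.1.injective (by rw [τ.2 i, hi])⟩
    · intro hx hvx
      obtain ⟨i, hi⟩ := hvx
      exact hx ⟨i, by rw [← hi, τ.2 i]⟩)
  invFun e := by
    classical
    refine ⟨((Equiv.sumCompl (fun x => x ∈ Set.range v)).symm.trans
      ((Equiv.sumCongr (((Equiv.ofInjective v v.injective).symm).trans
        (Equiv.ofInjective g g.injective)) e).trans
      (Equiv.sumCompl (fun y => y ∈ Set.range g)))), ?_⟩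
    intro i
    simp [Equiv.sumCompl_symm_apply_of_pos (Set.mem_range_self i)]
  left_inv := by
    classical
    rintro ⟨τ, hτ⟩
    ext x
    by_cases hx : x ∈ Set.range v
    · obtain ⟨i, rfl⟩ := hx
      simp [Equiv.sumCompl_symm_apply_of_pos (Set.mem_range_self i), hτ i]
    · simp [Equiv.sumCompl_symm_apply_of_neg hx]
  right_inv := by
    classical
    intro e
    ext ⟨x, hx⟩
    simp [Equiv.sumCompl_symm_apply_of_neg hx]

lemma card_prescribed (v g : ι ↪ α) :
    (univ.filter fun τ : Equiv.Perm α => ∀ i, τ (v i) = g i).card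
      = (Fintype.card α - Fintype.card ι).factorial := by
  classical
  rw [← Fintype.card_subtype]
  rw [Fintype.card_congr (prescribedEquiv v g)]
  have hv : Fintype.card {x : α // x ∉ Set.range v} = Fintype.card α - Fintype.card ι := by
    rw [Fintype.card_subtype_compl]
    congr 1
    exact Set.card_range_of_injective v.injective
  have hg : Fintype.card {y : α // y ∉ Set.range g} = Fintype.card α - Fintype.card ι := by
    rw [Fintype.card_subtype_compl]
    congr 1
    exact Set.card_range_of_injective g.injective
  rw [Fintype.card_equiv (Fintype.equivOfCardEq (hv.trans hg.symm)), hv]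

section T1
variable {β : Type*} [Fintype β] [LinearOrder β]

def precompEquiv (e : Equiv.Perm (Fin 4)) : (Fin 4 ↪ β) ≃ (Fin 4 ↪ β) where
  toFun g := e.toEmbedding.trans g
  invFun g := e.symm.toEmbedding.trans g
  left_inv g := by ext x; simp
  right_inv g := by ext x; simp

lemma card_filter_precomp (e : Equiv.Perm (Fin 4)) (P : (Fin 4 ↪ β) → Prop) [DecidablePred P] :
    (univ.filter fun g : Fin 4 ↪ β => P (e.toEmbedding.trans g)).card
      = (univ.filter fun g : Fin 4 ↪ β => P g).card := by
  apply Finset.card_equiv (precompEquiv e)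
  intro g
  simp [precompEquiv]

lemma g_ne (g : Fin 4 ↪ β) {i j : Fin 4} (h : i ≠ j) : g i ≠ g j :=
  fun hh => h (g.injective hh)

lemma four_mul_T1 :
    4 * (univ.filter fun g : Fin 4 ↪ β => g 2 < g 0 ∧ g 1 < g 3).card
      = (Fintype.card β).descFactorial 4 := by
  classical
  have key1 : (univ.filter fun g : Fin 4 ↪ β => g 0 < g 2).card
      = (univ.filter fun g : Fin 4 ↪ β => g 2 < g 0).card := by
    have h := card_filter_precomp (β := β) (Equiv.swap 0 2) (fun g => g 2 < g 0)
    simp only [Function.Embedding.trans_apply, Equiv.coe_toEmbedding,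
      Equiv.swap_apply_left, Equiv.swap_apply_right] at h
    exact h
  have key2 : (univ.filter fun g : Fin 4 ↪ β => g 2 < g 0 ∧ g 3 < g 1).card
      = (univ.filter fun g : Fin 4 ↪ β => g 2 < g 0 ∧ g 1 < g 3).card := by
    have h := card_filter_precomp (β := β) (Equiv.swap 1 3)
      (fun g => g 2 < g 0 ∧ g 1 < g 3)
    simp only [Function.Embedding.trans_apply, Equiv.coe_toEmbedding,
      Equiv.swap_apply_left, Equiv.swap_apply_right,
      Equiv.swap_apply_of_ne_of_ne (show (2:Fin 4) ≠ 1 by decide) (show (2:Fin 4) ≠ 3 by decide),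
      Equiv.swap_apply_of_ne_of_ne (show (0:Fin 4) ≠ 1 by decide)
        (show (0:Fin 4) ≠ 3 by decide)] at h
    exact h
  have split1 : (univ.filter fun g : Fin 4 ↪ β => g 2 < g 0).card
      + (univ.filter fun g : Fin 4 ↪ β => g 0 < g 2).card
      = Fintype.card (Fin 4 ↪ β) := by
    have hf : (univ.filter fun g : Fin 4 ↪ β => ¬ g 2 < g 0)
        = univ.filter fun g : Fin 4 ↪ β => g 0 < g 2 :=
      filter_congr (fun g _ => by
        have hne := g_ne g (show (0:Fin 4) ≠ 2 by decide)
        simp only [not_lt]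
        exact ⟨fun h => lt_of_le_of_ne h hne, fun h => le_of_lt h⟩)
    rw [← Finset.card_univ,
      ← Finset.card_filter_add_card_filter_not (s := univ)
        (p := fun g : Fin 4 ↪ β => g 2 < g 0), hf]
  have split2 : (univ.filter fun g : Fin 4 ↪ β => g 2 < g 0 ∧ g 1 < g 3).card
      + (univ.filter fun g : Fin 4 ↪ β => g 2 < g 0 ∧ g 3 < g 1).card
      = (univ.filter fun g : Fin 4 ↪ β => g 2 < g 0).card := by
    have hf : ((univ.filter fun g : Fin 4 ↪ β => g 2 < g 0).filter
          fun g : Fin 4 ↪ β => ¬ g 1 < g 3)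
        = univ.filter fun g : Fin 4 ↪ β => g 2 < g 0 ∧ g 3 < g 1 := by
      rw [Finset.filter_filter]
      exact filter_congr (fun g _ => by
        have hne := g_ne g (show (3:Fin 4) ≠ 1 by decide)
        simp only [not_lt]
        exact ⟨fun ⟨h1, h2⟩ => ⟨h1, lt_of_le_of_ne h2 hne⟩,
          fun ⟨h1, h2⟩ => ⟨h1, le_of_lt h2⟩⟩)
    rw [← Finset.card_filter_add_card_filter_not
        (s := univ.filter fun g : Fin 4 ↪ β => g 2 < g 0)
        (p := fun g : Fin 4 ↪ β => g 1 < g 3), Finset.filter_filter, hf]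
  have hcard : Fintype.card (Fin 4 ↪ β) = (Fintype.card β).descFactorial 4 := by
    rw [Fintype.card_embedding_eq, Fintype.card_fin]
  omega
end T1

section T2

lemma sum_sq_id_aux : ∀ L : ℕ, 3 * ∑ k ∈ Finset.range (L+2), k * (k-1) = (L+2)*(L+1)*L := by
  intro L
  induction L with
  | zero => simp [Finset.sum_range_succ]
  | succ J ih =>
    have : J + 1 + 2 = (J + 2) + 1 := by omega
    rw [this, Finset.sum_range_succ, Nat.mul_add, ih,
      show (J+2) - 1 = J+1 from rfl]
    ring

lemma sum_sq_id (N : ℕ) : 3 * ∑ k ∈ Finset.range N, k * (k-1) = N * (N-1) * (N-2) := by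
  rcases N with _ | K
  · simp
  rcases K with _ | L
  · simp
  rw [sum_sq_id_aux, show (L+1+1) - 1 = L+1 from rfl, show (L+1+1) - 2 = L from rfl]

lemma card_pairs {m : ℕ} (p : Fin m) :
    (univ.filter fun bc : Fin m × Fin m => bc.1 < p ∧ bc.2 < p ∧ bc.1 ≠ bc.2).card
      = p.val * (p.val - 1) := by
  classical
  set L : Finset (Fin m) := univ.filter (· < p) with hL
  have hLcard : L.card = p.val := by
    have : L = Finset.Iio p := by
      ext x; simp [hL, Finset.mem_Iio]
    rw [this, Fin.card_Iio]
  have hset : (univ.filter fun bc : Fin m × Fin m => bc.1 < p ∧ bc.2 < p ∧ bc.1 ≠ bc.2)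
      = (L ×ˢ L).filter fun bc => bc.1 ≠ bc.2 := by
    ext ⟨a, b⟩
    simp [hL, Finset.mem_product, and_assoc]
  have hdiag : ((L ×ˢ L).filter fun bc => bc.1 = bc.2) = L.image (fun b => (b, b)) := by
    ext ⟨a, b⟩
    simp only [Finset.mem_filter, Finset.mem_product, Finset.mem_image]
    constructor
    · rintro ⟨⟨h1, h2⟩, h3⟩
      exact ⟨a, h1, by simp_all⟩
    · rintro ⟨x, hx, h⟩
      cases h
      exact ⟨⟨hx, hx⟩, rfl⟩
  have h1 : (((L ×ˢ L).filter fun bc => bc.1 = bc.2)).card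
      + (((L ×ˢ L).filter fun bc => ¬ bc.1 = bc.2)).card = L.card * L.card := by
    rw [Finset.card_filter_add_card_filter_not, Finset.card_product]
  have h2 : (((L ×ˢ L).filter fun bc => bc.1 = bc.2)).card = p.val := by
    rw [hdiag, Finset.card_image_of_injective _ (fun a b h => (Prod.mk.injEq .. ▸ h).1), hLcard]
  rw [hset]
  have h3 : (((L ×ˢ L).filter fun bc => ¬ bc.1 = bc.2))
      = (((L ×ˢ L).filter fun bc => bc.1 ≠ bc.2)) := rfl
  rw [← h3]
  rcases hp : p.val with _ | q
  · have := h1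
    rw [h2, hLcard, hp] at this
    omega
  · have := h1
    rw [h2, hLcard, hp] at this
    have : ((L ×ˢ L).filter fun bc => ¬ bc.1 = bc.2).card = (q+1)*(q+1) - (q+1) := by omega
    rw [this]
    simp only [Nat.add_sub_cancel]
    ring_nf
    omega

end T2

section T2b

def mkEmb4 {m : ℕ} (x : Fin 4 → Fin m)
    (h : x 0 ≠ x 1 ∧ x 0 ≠ x 2 ∧ x 0 ≠ x 3 ∧ x 1 ≠ x 2 ∧ x 1 ≠ x 3 ∧ x 2 ≠ x 3) :
    Fin 4 ↪ Fin m :=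
  ⟨x, by
    obtain ⟨h1, h2, h3, h4, h5, h6⟩ := h
    intro i j hij
    fin_cases i <;> fin_cases j <;> simp_all⟩

lemma T2_fiber_card {m : ℕ} (p : Fin m) (hp : p.val + 1 < m) :
    (univ.filter fun g : Fin 4 ↪ Fin m =>
        ((g 3).val + 1 = (g 0).val ∧ g 2 < g 0 ∧ g 1 < g 3) ∧ g 3 = p).card
      = p.val * (p.val - 1) := by
  classical
  rw [← card_pairs p]
  refine Finset.card_bij' (fun g _ => (g 1, g 2)) (fun bc hbc => mkEmb4
    ![⟨p.val + 1, hp⟩, bc.1, bc.2, p] ?_) ?_ ?_ ?_ ?_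
  · simp only [Finset.mem_filter, Finset.mem_univ, true_and] at hbc
    obtain ⟨hb, hc, hne⟩ := hbc
    rw [Fin.lt_def] at hb hc
    refine ⟨?_, ?_, ?_, hne, ?_, ?_⟩
    · show (⟨p.val + 1, hp⟩ : Fin m) ≠ bc.1
      exact Fin.ne_of_val_ne (show p.val + 1 ≠ bc.1.val by omega)
    · show (⟨p.val + 1, hp⟩ : Fin m) ≠ bc.2
      exact Fin.ne_of_val_ne (show p.val + 1 ≠ bc.2.val by omega)
    · show (⟨p.val + 1, hp⟩ : Fin m) ≠ p
      exact Fin.ne_of_val_ne (show p.val + 1 ≠ p.val by omega)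
    · exact Fin.ne_of_val_ne (show bc.1.val ≠ p.val by omega)
    · exact Fin.ne_of_val_ne (show bc.2.val ≠ p.val by omega)
  · intro g hg
    simp only [Finset.mem_filter, Finset.mem_univ, true_and] at hg ⊢
    obtain ⟨⟨h0, h2, h1⟩, h3⟩ := hg
    subst h3
    refine ⟨h1, ?_, g_ne g (by decide)⟩
    have hne := g_ne g (show (2 : Fin 4) ≠ 3 by decide)
    rw [Fin.lt_def] at h2 ⊢
    rw [Fin.ne_iff_vne] at hne
    omega
  · intro bc hbc
    simp only [Finset.mem_filter, Finset.mem_univ, true_and] at hbc ⊢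
    obtain ⟨hb, hc, hne⟩ := hbc
    rw [Fin.lt_def] at hb hc
    refine ⟨⟨rfl, ?_, ?_⟩, rfl⟩
    · show (bc.2 : Fin m) < (⟨p.val + 1, hp⟩ : Fin m)
      rw [Fin.lt_def]
      show bc.2.val < p.val + 1
      omega
    · show (bc.1 : Fin m) < p
      rw [Fin.lt_def]
      omega
  · intro g hg
    simp only [Finset.mem_filter, Finset.mem_univ, true_and] at hg
    obtain ⟨⟨h0, h2, h1⟩, h3⟩ := hg
    subst h3
    apply DFunLike.ext
    intro i
    fin_cases i
    · show (⟨(g 3).val + 1, hp⟩ : Fin m) = g 0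
      exact Fin.ext h0
    · rfl
    · rfl
    · rfl
  · intro bc hbc
    rfl

end T2b

lemma three_mul_T2 (n : ℕ) :
    3 * (univ.filter fun g : Fin 4 ↪ Fin (n+2) =>
        (g 3).val + 1 = (g 0).val ∧ g 2 < g 0 ∧ g 1 < g 3).card
      = (n+1) * n * (n-1) := by
  classical
  rw [Finset.card_eq_sum_card_fiberwise (f := fun g : Fin 4 ↪ Fin (n+2) => g 3)
    (t := univ) (fun g _ => mem_univ _)]
  have key : ∀ p : Fin (n + 2),
      ((univ.filter fun g : Fin 4 ↪ Fin (n+2) =>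
        (g 3).val + 1 = (g 0).val ∧ g 2 < g 0 ∧ g 1 < g 3).filter fun g => g 3 = p).card
      = if p.val + 1 < n + 2 then p.val * (p.val - 1) else 0 := by
    intro p
    rw [Finset.filter_filter]
    split_ifs with h
    · exact T2_fiber_card p h
    · rw [Finset.card_eq_zero, Finset.eq_empty_iff_forall_notMem]
      intro g hg
      simp only [Finset.mem_filter, mem_univ, true_and] at hg
      obtain ⟨⟨h0, _, _⟩, h3⟩ := hg
      rw [h3] at h0
      have := (g 0).isLt
      omega
  rw [Finset.sum_congr rfl (fun p _ => key p)]
  rw [Fin.sum_univ_eq_sum_range (fun k => if k + 1 < n + 2 then k * (k-1) else 0)]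
  rw [Finset.sum_range_succ, if_neg (by omega), Nat.add_zero]
  rw [Finset.sum_congr rfl (fun k hk => if_pos (by
    have := Finset.mem_range.mp hk
    omega))]
  have := sum_sq_id (n+1)
  simpa using this



lemma card_symm_filter {m : ℕ} (R : Equiv.Perm (Fin m) → Prop) [DecidablePred R] :
    (univ.filter fun σ : Equiv.Perm (Fin m) => R σ.symm).card
      = (univ.filter fun τ : Equiv.Perm (Fin m) => R τ).card := by
  apply Finset.card_nbij' (fun σ => σ.symm) (fun τ => τ.symm) <;> simp [Set.MapsTo, Set.LeftInvOn, Set.RightInvOn]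

lemma main_count (k : ℕ) (vemb : Fin 4 ↪ Fin (k+2+2)) :
    12 * (univ.filter fun τ : Equiv.Perm (Fin (k+2+2)) =>
      ((τ (vemb 2)).val < (τ (vemb 0)).val ∧ (τ (vemb 1)).val < (τ (vemb 3)).val) ∧
        ¬ ((τ (vemb 0)).val = (τ (vemb 3)).val + 1)).card
      = (k + 3).factorial * (3 * k + 8) := by
  have hfiber : ∀ g : Fin 4 ↪ Fin (k+2+2),
      (univ.filter fun τ : Equiv.Perm (Fin (k+2+2)) =>
        vemb.trans τ.toEmbedding = g).card = Nat.factorial k := by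
    intro g
    have heq : (univ.filter fun τ : Equiv.Perm (Fin (k+2+2)) =>
        vemb.trans τ.toEmbedding = g)
        = univ.filter fun τ => ∀ i, τ (vemb i) = g i := by
      apply filter_congr
      intro τ _
      constructor
      · intro h i
        rw [← h]; rfl
      · intro h
        exact DFunLike.ext _ _ (fun i => h i)
    rw [heq]
    have h := card_prescribed vemb g
    rw [Fintype.card_fin, Fintype.card_fin, show k + 2 + 2 - 4 = k by omega] at h
    rw [← h]
    apply Finset.card_nbij' id id <;> intro τ hτ <;>
      simp only [Finset.mem_coe, Finset.mem_filter, Finset.mem_univ, true_and, id] at hτ ⊢ <;>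
      exact hτ
  -- Claim A
  have claimA : 4 * (univ.filter fun τ : Equiv.Perm (Fin (k+2+2)) =>
      (τ (vemb 2)).val < (τ (vemb 0)).val ∧ (τ (vemb 1)).val < (τ (vemb 3)).val).card
      = Nat.factorial (k + 4) := by
    have hmaps : ∀ τ ∈ (univ.filter fun τ : Equiv.Perm (Fin (k+2+2)) =>
        (τ (vemb 2)).val < (τ (vemb 0)).val ∧ (τ (vemb 1)).val < (τ (vemb 3)).val),
        vemb.trans τ.toEmbedding ∈
        (univ.filter fun g : Fin 4 ↪ Fin (k+2+2) => g 2 < g 0 ∧ g 1 < g 3) := by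
      intro τ hτ
      simp only [Finset.mem_filter, Finset.mem_univ, true_and] at hτ ⊢
      obtain ⟨ha, hb⟩ := hτ
      constructor
      · show τ (vemb 2) < τ (vemb 0)
        rw [Fin.lt_def]; exact ha
      · show τ (vemb 1) < τ (vemb 3)
        rw [Fin.lt_def]; exact hb
    rw [Finset.card_eq_sum_card_fiberwise hmaps]
    have hstep : ∀ g ∈ (univ.filter fun g : Fin 4 ↪ Fin (k+2+2) =>
        g 2 < g 0 ∧ g 1 < g 3),
        ((univ.filter fun τ : Equiv.Perm (Fin (k+2+2)) =>
          (τ (vemb 2)).val < (τ (vemb 0)).val ∧ (τ (vemb 1)).val < (τ (vemb 3)).val).filter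
            fun τ => vemb.trans τ.toEmbedding = g).card
          = Nat.factorial k := by
      intro g hg
      simp only [Finset.mem_filter, Finset.mem_univ, true_and] at hg
      rw [← hfiber g]
      rw [Finset.filter_filter]
      apply Finset.card_nbij' id id <;> intro τ hτ <;>
        simp only [Finset.mem_coe, Finset.mem_filter, Finset.mem_univ, true_and, id] at hτ ⊢
      · exact hτ.2
      · refine ⟨⟨?_, ?_⟩, hτ⟩
        · have e2 : τ (vemb 2) = g 2 := by rw [← hτ]; rfl
          have e0 : τ (vemb 0) = g 0 := by rw [← hτ]; rfl
          rw [e2, e0]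
          exact (Fin.lt_def).1 hg.1
        · have e1 : τ (vemb 1) = g 1 := by rw [← hτ]; rfl
          have e3 : τ (vemb 3) = g 3 := by rw [← hτ]; rfl
          rw [e1, e3]
          exact (Fin.lt_def).1 hg.2
    rw [Finset.sum_congr rfl hstep, Finset.sum_const, smul_eq_mul]
    calc 4 * ((univ.filter fun g : Fin 4 ↪ Fin (k+2+2) =>
          g 2 < g 0 ∧ g 1 < g 3).card * Nat.factorial k)
        = (4 * (univ.filter fun g : Fin 4 ↪ Fin (k+2+2) =>
          g 2 < g 0 ∧ g 1 < g 3).card) * Nat.factorial k := by ring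
      _ = (Fintype.card (Fin (k+2+2))).descFactorial 4 * Nat.factorial k := by
          rw [four_mul_T1]
      _ = Nat.factorial (k + 4) := by
          rw [Fintype.card_fin,
            show (k+2+2).descFactorial 4 = (k+1)*((k+2)*((k+3)*((k+4)*1))) from rfl,
            show Nat.factorial (k+4)
              = (k+4)*((k+3)*((k+2)*((k+1)*Nat.factorial k))) from rfl]
          ring
  -- Claim B
  have claimB : 3 * (univ.filter fun τ : Equiv.Perm (Fin (k+2+2)) =>
      ((τ (vemb 2)).val < (τ (vemb 0)).val ∧ (τ (vemb 1)).val < (τ (vemb 3)).val) ∧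
        (τ (vemb 0)).val = (τ (vemb 3)).val + 1).card
      = Nat.factorial (k + 3) := by
    have hmaps : ∀ τ ∈ (univ.filter fun τ : Equiv.Perm (Fin (k+2+2)) =>
        ((τ (vemb 2)).val < (τ (vemb 0)).val ∧ (τ (vemb 1)).val < (τ (vemb 3)).val) ∧
          (τ (vemb 0)).val = (τ (vemb 3)).val + 1),
        vemb.trans τ.toEmbedding ∈
        (univ.filter fun g : Fin 4 ↪ Fin (k+2+2) =>
          (g 3).val + 1 = (g 0).val ∧ g 2 < g 0 ∧ g 1 < g 3) := by
      intro τ hτ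
      simp only [Finset.mem_filter, Finset.mem_univ, true_and] at hτ ⊢
      obtain ⟨⟨ha, hb⟩, hc⟩ := hτ
      refine ⟨?_, ?_, ?_⟩
      · show (τ (vemb 3)).val + 1 = (τ (vemb 0)).val
        omega
      · show τ (vemb 2) < τ (vemb 0)
        rw [Fin.lt_def]; exact ha
      · show τ (vemb 1) < τ (vemb 3)
        rw [Fin.lt_def]; exact hb
    rw [Finset.card_eq_sum_card_fiberwise hmaps]
    have hstep : ∀ g ∈ (univ.filter fun g : Fin 4 ↪ Fin (k+2+2) =>
        (g 3).val + 1 = (g 0).val ∧ g 2 < g 0 ∧ g 1 < g 3),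
        ((univ.filter fun τ : Equiv.Perm (Fin (k+2+2)) =>
          ((τ (vemb 2)).val < (τ (vemb 0)).val ∧ (τ (vemb 1)).val < (τ (vemb 3)).val) ∧
            (τ (vemb 0)).val = (τ (vemb 3)).val + 1).filter
            fun τ => vemb.trans τ.toEmbedding = g).card
          = Nat.factorial k := by
      intro g hg
      simp only [Finset.mem_filter, Finset.mem_univ, true_and] at hg
      rw [← hfiber g]
      rw [Finset.filter_filter]
      apply Finset.card_nbij' id id <;> intro τ hτ <;>
        simp only [Finset.mem_coe, Finset.mem_filter, Finset.mem_univ, true_and, id] at hτ ⊢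
      · exact hτ.2
      · have e0 : τ (vemb 0) = g 0 := by rw [← hτ]; rfl
        have e1 : τ (vemb 1) = g 1 := by rw [← hτ]; rfl
        have e2 : τ (vemb 2) = g 2 := by rw [← hτ]; rfl
        have e3 : τ (vemb 3) = g 3 := by rw [← hτ]; rfl
        refine ⟨⟨⟨?_, ?_⟩, ?_⟩, hτ⟩
        · rw [e2, e0]; exact (Fin.lt_def).1 hg.2.1
        · rw [e1, e3]; exact (Fin.lt_def).1 hg.2.2
        · rw [e0, e3]; omega
    rw [Finset.sum_congr rfl hstep, Finset.sum_const, smul_eq_mul]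
    calc 3 * ((univ.filter fun g : Fin 4 ↪ Fin (k+2+2) =>
          (g 3).val + 1 = (g 0).val ∧ g 2 < g 0 ∧ g 1 < g 3).card * Nat.factorial k)
        = (3 * (univ.filter fun g : Fin 4 ↪ Fin (k+2+2) =>
          (g 3).val + 1 = (g 0).val ∧ g 2 < g 0 ∧ g 1 < g 3).card) * Nat.factorial k := by
          ring
      _ = ((k+2+1) * (k+2) * (k+2-1)) * Nat.factorial k := by rw [three_mul_T2 (k+2)]
      _ = Nat.factorial (k + 3) := by
          rw [show (k+2-1) = k+1 from rfl,
            show Nat.factorial (k+3) = (k+3)*((k+2)*((k+1)*Nat.factorial k)) from rfl]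
          ring
  -- split and conclude
  have hsplit : (univ.filter fun τ : Equiv.Perm (Fin (k+2+2)) =>
      ((τ (vemb 2)).val < (τ (vemb 0)).val ∧ (τ (vemb 1)).val < (τ (vemb 3)).val) ∧
        (τ (vemb 0)).val = (τ (vemb 3)).val + 1).card
      + (univ.filter fun τ : Equiv.Perm (Fin (k+2+2)) =>
      ((τ (vemb 2)).val < (τ (vemb 0)).val ∧ (τ (vemb 1)).val < (τ (vemb 3)).val) ∧
        ¬ ((τ (vemb 0)).val = (τ (vemb 3)).val + 1)).card
      = (univ.filter fun τ : Equiv.Perm (Fin (k+2+2)) =>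
      (τ (vemb 2)).val < (τ (vemb 0)).val ∧ (τ (vemb 1)).val < (τ (vemb 3)).val).card := by
    rw [← Finset.card_filter_add_card_filter_not
      (s := univ.filter fun τ : Equiv.Perm (Fin (k+2+2)) =>
        (τ (vemb 2)).val < (τ (vemb 0)).val ∧ (τ (vemb 1)).val < (τ (vemb 3)).val)
      (p := fun τ => (τ (vemb 0)).val = (τ (vemb 3)).val + 1),
      Finset.filter_filter, Finset.filter_filter]
  set a := (univ.filter fun τ : Equiv.Perm (Fin (k+2+2)) =>
      (τ (vemb 2)).val < (τ (vemb 0)).val ∧ (τ (vemb 1)).val < (τ (vemb 3)).val).card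
  set b := (univ.filter fun τ : Equiv.Perm (Fin (k+2+2)) =>
      ((τ (vemb 2)).val < (τ (vemb 0)).val ∧ (τ (vemb 1)).val < (τ (vemb 3)).val) ∧
        (τ (vemb 0)).val = (τ (vemb 3)).val + 1).card
  set r := (univ.filter fun τ : Equiv.Perm (Fin (k+2+2)) =>
      ((τ (vemb 2)).val < (τ (vemb 0)).val ∧ (τ (vemb 1)).val < (τ (vemb 3)).val) ∧
        ¬ ((τ (vemb 0)).val = (τ (vemb 3)).val + 1)).card
  have h12 : 12 * r = 3 * (4 * a) - 4 * (3 * b) := by omega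
  rw [h12, claimA, claimB,
    show Nat.factorial (k+4) = (k+4) * Nat.factorial (k+3) from rfl,
    show 3 * ((k+4) * Nat.factorial (k+3)) = (3*k+12) * Nat.factorial (k+3) by ring,
    ← Nat.sub_mul, show 3*k+12-4 = 3*k+8 by omega, Nat.mul_comm]


end Aux

theorem stmt11 (n : ℕ) (hn : 2 ≤ n) :
    12 * Nat.card {σ : Equiv.Perm (Fin (n + 2)) //
        StripConstraints n 2 ![false, true] σ ∧ NoNDescent n σ}
      = (n + 1).factorial * (3 * n + 2) := by
  obtain ⟨k, rfl⟩ : ∃ k, n = k + 2 := ⟨n - 2, by omega⟩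
  have h0 : (0 : ℕ) < k + 2 + 2 := by omega
  have h1 : (1 : ℕ) < k + 2 + 2 := by omega
  have h2 : k + 2 < k + 2 + 2 := by omega
  have h3 : k + 2 + 1 < k + 2 + 2 := by omega
  rw [Nat.card_eq_fintype_card, Fintype.card_subtype]
  have hiff : ∀ σ : Equiv.Perm (Fin (k + 2 + 2)),
      (StripConstraints (k+2) 2 ![false, true] σ ∧ NoNDescent (k+2) σ) ↔
      (((σ.symm ⟨k+2, h2⟩).val < (σ.symm ⟨0, h0⟩).val ∧
        (σ.symm ⟨1, h1⟩).val < (σ.symm ⟨k+2+1, h3⟩).val) ∧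
        ¬ ((σ.symm ⟨0, h0⟩).val = (σ.symm ⟨k+2+1, h3⟩).val + 1)) := by
    intro σ
    constructor
    · rintro ⟨hsc, hnd⟩
      refine ⟨⟨(hsc 0).2 rfl, (hsc 1).1 rfl⟩, ?_⟩
      intro heq
      have := hnd (σ.symm ⟨k+2+1, h3⟩) (σ.symm ⟨0, h0⟩) heq
      rw [Equiv.apply_symm_apply, Equiv.apply_symm_apply] at this
      have e1 : (⟨k+2+1, h3⟩ : Fin (k+2+2)).val = k + 2 + 1 := rfl
      have e2 : (⟨0, h0⟩ : Fin (k+2+2)).val = 0 := rfl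
      omega
    · rintro ⟨⟨ha, hb⟩, hc⟩
      refine ⟨?_, ?_⟩
      · intro i
        fin_cases i
        · exact ⟨fun hw => absurd hw (by decide), fun _ => ha⟩
        · exact ⟨fun _ => hb, fun hw => absurd hw (by decide)⟩
      · intro j j' hj'
        by_contra hgt
        push_neg at hgt
        have hlt := (σ j).isLt
        have hlt' := (σ j').isLt
        have hj0 : (σ j').val = 0 := by omega
        have hjn1 : (σ j).val = k + 2 + 1 := by omega
        have e1 : σ j' = ⟨0, h0⟩ := Fin.ext hj0
        have e2 : σ j = ⟨k+2+1, h3⟩ := Fin.ext hjn1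
        have f1 : j' = σ.symm ⟨0, h0⟩ := by rw [← e1, Equiv.symm_apply_apply]
        have f2 : j = σ.symm ⟨k+2+1, h3⟩ := by rw [← e2, Equiv.symm_apply_apply]
        apply hc
        rw [f1, f2] at hj'
        exact hj'
  rw [filter_congr (fun σ _ => hiff σ)]
  rw [card_symm_filter (fun τ : Equiv.Perm (Fin (k+2+2)) =>
    ((τ ⟨k+2, h2⟩).val < (τ ⟨0, h0⟩).val ∧ (τ ⟨1, h1⟩).val < (τ ⟨k+2+1, h3⟩).val) ∧
      ¬ ((τ ⟨0, h0⟩).val = (τ ⟨k+2+1, h3⟩).val + 1))]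
  have hvdis : (![⟨0, h0⟩, ⟨1, h1⟩, ⟨k+2, h2⟩, ⟨k+2+1, h3⟩] : Fin 4 → Fin (k+2+2)) 0
        ≠ ![⟨0, h0⟩, ⟨1, h1⟩, ⟨k+2, h2⟩, ⟨k+2+1, h3⟩] 1 ∧
      (![⟨0, h0⟩, ⟨1, h1⟩, ⟨k+2, h2⟩, ⟨k+2+1, h3⟩] : Fin 4 → Fin (k+2+2)) 0
        ≠ ![⟨0, h0⟩, ⟨1, h1⟩, ⟨k+2, h2⟩, ⟨k+2+1, h3⟩] 2 ∧
      (![⟨0, h0⟩, ⟨1, h1⟩, ⟨k+2, h2⟩, ⟨k+2+1, h3⟩] : Fin 4 → Fin (k+2+2)) 0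
        ≠ ![⟨0, h0⟩, ⟨1, h1⟩, ⟨k+2, h2⟩, ⟨k+2+1, h3⟩] 3 ∧
      (![⟨0, h0⟩, ⟨1, h1⟩, ⟨k+2, h2⟩, ⟨k+2+1, h3⟩] : Fin 4 → Fin (k+2+2)) 1
        ≠ ![⟨0, h0⟩, ⟨1, h1⟩, ⟨k+2, h2⟩, ⟨k+2+1, h3⟩] 2 ∧
      (![⟨0, h0⟩, ⟨1, h1⟩, ⟨k+2, h2⟩, ⟨k+2+1, h3⟩] : Fin 4 → Fin (k+2+2)) 1
        ≠ ![⟨0, h0⟩, ⟨1, h1⟩, ⟨k+2, h2⟩, ⟨k+2+1, h3⟩] 3 ∧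
      (![⟨0, h0⟩, ⟨1, h1⟩, ⟨k+2, h2⟩, ⟨k+2+1, h3⟩] : Fin 4 → Fin (k+2+2)) 2
        ≠ ![⟨0, h0⟩, ⟨1, h1⟩, ⟨k+2, h2⟩, ⟨k+2+1, h3⟩] 3 :=
    ⟨Fin.ne_of_val_ne (show (0:ℕ) ≠ 1 by omega),
     Fin.ne_of_val_ne (show (0:ℕ) ≠ k + 2 by omega),
     Fin.ne_of_val_ne (show (0:ℕ) ≠ k + 2 + 1 by omega),
     Fin.ne_of_val_ne (show (1:ℕ) ≠ k + 2 by omega),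
     Fin.ne_of_val_ne (show (1:ℕ) ≠ k + 2 + 1 by omega),
     Fin.ne_of_val_ne (show (k+2:ℕ) ≠ k + 2 + 1 by omega)⟩
  have := main_count k (mkEmb4 ![⟨0, h0⟩, ⟨1, h1⟩, ⟨k+2, h2⟩, ⟨k+2+1, h3⟩] hvdis)
  rw [show (3:ℕ) * k + 8 = 3 * (k + 2) + 2 by omega] at this
  exact this
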